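/- (Curvature lemma) Let A be a p×p real symmetric matrix with eigenvalues γ₁ ≥ γ₂ ≥ … ≥ γ_p and let E be the orthogonal projection onto the span of eigenvectors corresponding to the d largest eigenvalues. If δ := γ_d − γ_{d+1} > 0, then for every symmetric F with 0 ⪯ F ⪯ I and tr(F) = d, one has (δ/2)‖E − F‖_F² ≤ ⟨A, E − F⟩, where ⟨A,B⟩ = tr(AB^T). -/

import Mathlib

open BigOperators Matrix
open scoped Classical

noncomputable def enorm {p : ℕ} (v : Fin p → ℝ) : ℝ := Real.sqrt (∑ i, (v i) ^ 2)

noncomputable def fnorm {p : ℕ} (A : Matrix (Fin p) (Fin p) ℝ) : ℝ :=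
  Real.sqrt (∑ i, ∑ j, (A i j) ^ 2)

def outer {p : ℕ} (u v : Fin p → ℝ) : Matrix (Fin p) (Fin p) ℝ :=
  Matrix.of fun i j => u i * v j

lemma trace_outer_mul {p : ℕ} (u : Fin p → ℝ) (M : Matrix (Fin p) (Fin p) ℝ) :
    (outer u u * M).trace = u ⬝ᵥ Mᵀ *ᵥ u := by
  simp only [Matrix.trace, Matrix.mul_apply, outer, dotProduct, Matrix.mulVec,
    Matrix.diag, Matrix.of_apply, Matrix.transpose_apply, Finset.mul_sum]
  exact Finset.sum_congr rfl fun i _ => Finset.sum_congr rfl fun j _ => by ring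

lemma dot_outer_dot {p : ℕ} (u w x y : Fin p → ℝ) :
    x ⬝ᵥ (outer u w) *ᵥ y = (x ⬝ᵥ u) * (w ⬝ᵥ y) := by
  simp only [outer, dotProduct, Matrix.mulVec, Matrix.of_apply, Finset.mul_sum,
    Finset.sum_mul]
  rw [Finset.sum_comm]
  exact Finset.sum_congr rfl fun i _ => Finset.sum_congr rfl fun j _ => by ring

lemma psd_trace_nonneg {p : ℕ} (M : Matrix (Fin p) (Fin p) ℝ) (h : M.PosSemidef) :
    0 ≤ M.trace := by
  refine Finset.sum_nonneg fun i _ => ?_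
  simpa using h.dotProduct_mulVec_nonneg (Pi.single i 1)

lemma conj_diag {p : ℕ} (V M : Matrix (Fin p) (Fin p) ℝ) (k : Fin p) :
    (V * M * Vᵀ) k k = (fun i => V k i) ⬝ᵥ M *ᵥ (fun i => V k i) := by
  simp only [Matrix.mul_apply, dotProduct, Matrix.mulVec, Matrix.transpose_apply,
    Finset.sum_mul, Finset.mul_sum]
  rw [Finset.sum_comm]
  exact Finset.sum_congr rfl fun i _ => Finset.sum_congr rfl fun j _ => by ring

lemma dot_sum_mulVec {p : ℕ} {ι : Type*} (x y : Fin p → ℝ) (s : Finset ι)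
    (M : ι → Matrix (Fin p) (Fin p) ℝ) :
    x ⬝ᵥ (∑ l ∈ s, M l) *ᵥ y = ∑ l ∈ s, x ⬝ᵥ (M l) *ᵥ y := by
  classical
  induction s using Finset.induction with
  | empty => simp
  | insert a s h ih =>
      rw [Finset.sum_insert h, Finset.sum_insert h, Matrix.add_mulVec,
        dotProduct_add, ih]

theorem stmt4 {p : ℕ} (A : Matrix (Fin p) (Fin p) ℝ) (γ : Fin p → ℝ) (v : Fin p → Fin p → ℝ)
    (hA : A = ∑ k, γ k • outer (v k) (v k))
    (hortho : ∀ k l, v k ⬝ᵥ v l = if k = l then (1 : ℝ) else 0)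
    (hmono : Antitone γ)
    (d : ℕ) (hd1 : 1 ≤ d) (hdp : d < p)
    (E : Matrix (Fin p) (Fin p) ℝ)
    (hE : E = ∑ k ∈ Finset.univ.filter (fun k : Fin p => (k : ℕ) < d), outer (v k) (v k))
    (hδ : 0 < γ ⟨d - 1, by omega⟩ - γ ⟨d, hdp⟩)
    (F : Matrix (Fin p) (Fin p) ℝ) (hFsymm : F.IsSymm) (hF0 : F.PosSemidef)
    (hF1 : ((1 : Matrix (Fin p) (Fin p) ℝ) - F).PosSemidef) (htr : F.trace = (d : ℝ)) :
    (γ ⟨d - 1, by omega⟩ - γ ⟨d, hdp⟩) / 2 * (fnorm (E - F)) ^ 2 ≤ (A * (E - F)ᵀ).trace := by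
  set S : Finset (Fin p) := Finset.univ.filter (fun k : Fin p => (k : ℕ) < d) with hS
  set f : Fin p → ℝ := fun k => v k ⬝ᵥ F *ᵥ v k with hfdef
  set δ₁ : ℝ := γ ⟨d - 1, by omega⟩ with hδ₁
  set δ₂ : ℝ := γ ⟨d, hdp⟩ with hδ₂
  have hFt : Fᵀ = F := hFsymm
  have hEt : Eᵀ = E := by
    rw [hE, Matrix.transpose_sum]
    refine Finset.sum_congr rfl fun k _ => ?_
    ext i j; simp [outer, Matrix.transpose_apply, mul_comm]
  have hcard : (S.card : ℝ) = (d : ℝ) := by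
    have : S = Finset.Iio (⟨d, hdp⟩ : Fin p) := by
      ext k; simp [hS, Fin.lt_def]
    rw [this, Fin.card_Iio]
  have hf0 : ∀ k, 0 ≤ f k := fun k => by simpa using hF0.dotProduct_mulVec_nonneg (v k)
  have hf1 : ∀ k, f k ≤ 1 := by
    intro k
    have h := hF1.dotProduct_mulVec_nonneg (v k)
    have hvv : v k ⬝ᵥ v k = 1 := by simpa using hortho k k
    simp only [star_trivial, Matrix.sub_mulVec, Matrix.one_mulVec, dotProduct_sub,
      hvv] at h
    linarith [h]
  have hsumf : ∑ k, f k = (d : ℝ) := by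
    set V : Matrix (Fin p) (Fin p) ℝ := Matrix.of v with hV
    have hVVt : V * Vᵀ = 1 := by
      ext k l
      simp only [Matrix.mul_apply, Matrix.transpose_apply, Matrix.one_apply]
      simpa [dotProduct, hV] using hortho k l
    have hVtV : Vᵀ * V = 1 := mul_eq_one_comm.mp hVVt
    have h1 : ∑ k, f k = (V * F * Vᵀ).trace := by
      rw [Matrix.trace]
      exact (Finset.sum_congr rfl fun k _ => (conj_diag V F k).symm)
    rw [h1, Matrix.trace_mul_cycle, hVtV, Matrix.one_mul, htr]
  have hdotE : ∀ k, v k ⬝ᵥ E *ᵥ v k = if (k : ℕ) < d then (1 : ℝ) else 0 := by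
    intro k
    rw [hE, dot_sum_mulVec]
    have : ∀ l ∈ S, v k ⬝ᵥ (outer (v l) (v l)) *ᵥ v k = if l = k then (1:ℝ) else 0 := by
      intro l _
      rw [dot_outer_dot, hortho, hortho]
      by_cases h : k = l <;> simp [h, eq_comm]
    rw [Finset.sum_congr rfl this, Finset.sum_ite_eq' S k (fun _ => (1:ℝ))]
    simp [hS]
  have htrA : (A * (E - F)ᵀ).trace
      = ∑ k, γ k * ((if (k : ℕ) < d then (1:ℝ) else 0) - f k) := by
    have hEFt : (E - F)ᵀ = E - F := by rw [Matrix.transpose_sub, hEt, hFt]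
    rw [hEFt, hA, Finset.sum_mul]
    simp_rw [Matrix.smul_mul]
    rw [Matrix.trace_sum]
    refine Finset.sum_congr rfl fun k _ => ?_
    rw [Matrix.trace_smul, smul_eq_mul, trace_outer_mul, Matrix.transpose_sub, hEt, hFt,
      Matrix.sub_mulVec, dotProduct_sub, hdotE k]
  have htrEF : (E * F).trace = ∑ k ∈ S, f k := by
    rw [hE, Finset.sum_mul, Matrix.trace_sum]
    refine Finset.sum_congr rfl fun k _ => ?_
    rw [trace_outer_mul, hFt]
  have htrEE : (E * E).trace = (d : ℝ) := by
    nth_rewrite 1 [hE]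
    rw [Finset.sum_mul, Matrix.trace_sum]
    have : ∀ k ∈ S, (outer (v k) (v k) * E).trace = 1 := by
      intro k hk
      rw [trace_outer_mul, hEt, hdotE k]
      simp only [hS, Finset.mem_filter] at hk
      simp [hk.2]
    rw [Finset.sum_congr rfl this, Finset.sum_const, nsmul_eq_mul, mul_one, hcard]
  have htrFF : (F * F).trace ≤ (d : ℝ) := by
    obtain ⟨B, hB⟩ : ∃ B : Matrix (Fin p) (Fin p) ℝ, F = Bᴴ * B := by
      open scoped MatrixOrder in
      obtain ⟨B, hB⟩ := CStarAlgebra.nonneg_iff_eq_star_mul_self.mp hF0.nonneg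
      exact ⟨B, by rw [hB, Matrix.star_eq_conjTranspose]⟩
    have hpsd : (B * ((1 : Matrix (Fin p) (Fin p) ℝ) - F) * Bᴴ).PosSemidef :=
      hF1.mul_mul_conjTranspose_same B
    have h1 : (0:ℝ) ≤ (B * ((1 : Matrix (Fin p) (Fin p) ℝ) - F) * Bᴴ).trace :=
      psd_trace_nonneg _ hpsd
    have h2 : (B * ((1 : Matrix (Fin p) (Fin p) ℝ) - F) * Bᴴ).trace
        = F.trace - (F * F).trace := by
      rw [Matrix.trace_mul_cycle, ← hB, Matrix.mul_sub, Matrix.mul_one, Matrix.trace_sub]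
    rw [h2, htr] at h1
    linarith
  have hfn : fnorm (E - F) ^ 2 = (d : ℝ) - 2 * (∑ k ∈ S, f k) + (F * F).trace := by
    have hnn : (0:ℝ) ≤ ∑ i, ∑ j, ((E - F) i j) ^ 2 :=
      Finset.sum_nonneg fun i _ => Finset.sum_nonneg fun j _ => sq_nonneg _
    have h1 : fnorm (E - F) ^ 2 = ∑ i, ∑ j, ((E - F) i j) ^ 2 := by
      rw [fnorm, Real.sq_sqrt hnn]
    have h2 : ∑ i, ∑ j, ((E - F) i j) ^ 2 = ((E - F) * (E - F)ᵀ).trace := by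
      rw [Matrix.trace]
      refine Finset.sum_congr rfl fun i _ => ?_
      simp only [Matrix.mul_apply, Matrix.transpose_apply, Matrix.diag, sq]
    have hEFt : (E - F)ᵀ = E - F := by rw [Matrix.transpose_sub, hEt, hFt]
    rw [h1, h2, hEFt, Matrix.sub_mul, Matrix.mul_sub, Matrix.mul_sub, Matrix.trace_sub,
      Matrix.trace_sub, Matrix.trace_sub, htrEE, htrEF,
      Matrix.trace_mul_comm F E, htrEF]
    ring
  set s : ℝ := (d : ℝ) - ∑ k ∈ S, f k with hs
  have hfS1 : ∑ k ∈ S, f k ≤ (d : ℝ) := by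
    calc ∑ k ∈ S, f k ≤ ∑ k ∈ S, (1:ℝ) := Finset.sum_le_sum fun k _ => hf1 k
    _ = (d : ℝ) := by rw [Finset.sum_const, nsmul_eq_mul, mul_one, hcard]
  have hs0 : 0 ≤ s := by rw [hs]; linarith
  have hcomp : ∑ k ∈ Sᶜ, f k = s := by
    have := Finset.sum_add_sum_compl S f
    rw [hsumf] at this
    rw [hs]; linarith
  have hlow : (δ₁ - δ₂) * s ≤ (A * (E - F)ᵀ).trace := by
    rw [htrA, ← Finset.sum_add_sum_compl S
      (fun k => γ k * ((if (k : ℕ) < d then (1:ℝ) else 0) - f k))]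
    have hb1 : ∀ k ∈ S, δ₁ * (1 - f k) ≤ γ k * ((if (k : ℕ) < d then (1:ℝ) else 0) - f k) := by
      intro k hk
      simp only [hS, Finset.mem_filter] at hk
      rw [if_pos hk.2]
      have hγ : δ₁ ≤ γ k := by
        refine hmono ?_
        rw [Fin.le_def]; simp; omega
      have := hf1 k
      nlinarith
    have hb2 : ∀ k ∈ Sᶜ, -(δ₂ * f k) ≤ γ k * ((if (k : ℕ) < d then (1:ℝ) else 0) - f k) := by
      intro k hk
      simp only [hS, Finset.mem_compl, Finset.mem_filter, Finset.mem_univ, true_and,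
        not_lt] at hk
      rw [if_neg (by omega)]
      have hγ : γ k ≤ δ₂ := by
        refine hmono ?_
        rw [Fin.le_def]; simpa using hk
      have := hf0 k
      nlinarith
    have h1 : ∑ k ∈ S, δ₁ * (1 - f k) = δ₁ * s := by
      rw [← Finset.mul_sum, Finset.sum_sub_distrib, Finset.sum_const, nsmul_eq_mul, mul_one,
        hcard, hs]
    have h2 : ∑ k ∈ Sᶜ, -(δ₂ * f k) = -(δ₂ * s) := by
      rw [Finset.sum_neg_distrib, ← Finset.mul_sum, hcomp]
    calc (δ₁ - δ₂) * s = δ₁ * s + -(δ₂ * s) := by ring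
    _ ≤ (∑ k ∈ S, γ k * ((if (k : ℕ) < d then (1:ℝ) else 0) - f k))
        + ∑ k ∈ Sᶜ, γ k * ((if (k : ℕ) < d then (1:ℝ) else 0) - f k) := by
        refine add_le_add ?_ ?_
        · rw [← h1]; exact Finset.sum_le_sum hb1
        · rw [← h2]; exact Finset.sum_le_sum hb2
  have h2s : fnorm (E - F) ^ 2 ≤ 2 * s := by rw [hfn, hs]; linarith
  calc (δ₁ - δ₂) / 2 * fnorm (E - F) ^ 2 ≤ (δ₁ - δ₂) / 2 * (2 * s) := by
        apply mul_le_mul_of_nonneg_left h2s; linarith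
  _ = (δ₁ - δ₂) * s := by ring
  _ ≤ (A * (E - F)ᵀ).trace := hlow
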